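/- Let G(X,Y) be a λ-dense bipartite graph (|X| = |Y| = n, every degree greater than (1/2+λ)n, λ ∈ (0,1/2)) with adjacency matrix A, and let Q = D_α A D_β be its doubly stochastic scaling. Then every entry of Q satisfies Q_{ij} ≤ 1/(2λn). -/

import Mathlib

open Finset

/-- (Huber–Law) Every entry of the doubly stochastic scaling `Q = D_α A D_β` of the
adjacency matrix of a λ-dense bipartite graph is at most `1/(2λn)`. -/
theorem doubly_stochastic_scaling_entry_bound
    (n : ℕ) (lam : ℝ) (hlam : 0 < lam) (hlam' : lam < 1 / 2)
    (A : Matrix (Fin n) (Fin n) ℝ) (h01 : ∀ i j, A i j = 0 ∨ A i j = 1)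
    (hrowdeg : ∀ i, ((1 / 2 + lam) * n : ℝ) < ∑ j, A i j)
    (hcoldeg : ∀ j, ((1 / 2 + lam) * n : ℝ) < ∑ i, A i j)
    (α β : Fin n → ℝ) (hα : ∀ i, 0 < α i) (hβ : ∀ j, 0 < β j)
    (Q : Matrix (Fin n) (Fin n) ℝ) (hQ : ∀ i j, Q i j = α i * A i j * β j)
    (hrows : ∀ i, ∑ j, Q i j = 1) (hcols : ∀ j, ∑ i, Q i j = 1) :
    ∀ i j, Q i j ≤ 1 / (2 * lam * n) := by
  intro i j
  have hn : (0:ℝ) < n := by exact_mod_cast i.pos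
  have hQnn : ∀ k m, 0 ≤ Q k m := by
    intro k m
    rw [hQ]
    rcases h01 k m with h | h <;> rw [h]
    · simp
    · have := (hα k).le; have := (hβ m).le; nlinarith
  set S := Finset.univ.filter (fun m => A i m = 1) with hS
  set T := Finset.univ.filter (fun k => A k j = 1) with hT
  have hScard : (S.card : ℝ) = ∑ m, A i m := by
    rw [hS, Finset.card_filter]
    push_cast
    apply Finset.sum_congr rfl
    intro m _
    rcases h01 i m with h | h <;> simp [h]
  have hTcard : (T.card : ℝ) = ∑ k, A k j := by
    rw [hT, Finset.card_filter]
    push_cast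
    apply Finset.sum_congr rfl
    intro k _
    rcases h01 k j with h | h <;> simp [h]
  have hSgt : ((1/2 + lam) * n : ℝ) < S.card := by rw [hScard]; exact hrowdeg i
  have hTgt : ((1/2 + lam) * n : ℝ) < T.card := by rw [hTcard]; exact hcoldeg j
  -- the key pointwise inequality
  have key : ∀ k ∈ T, ∀ m ∈ S, Q i j * Q k m ≤ Q i m * Q k j := by
    intro k hk m hm
    rw [hT, Finset.mem_filter] at hk
    rw [hS, Finset.mem_filter] at hm
    rw [hQ, hQ, hQ, hQ, hm.2, hk.2]
    have hij : A i j ≤ 1 := by rcases h01 i j with h | h <;> rw [h] <;> norm_num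
    have hij0 : 0 ≤ A i j := by rcases h01 i j with h | h <;> rw [h] <;> norm_num
    have hkm : A k m ≤ 1 := by rcases h01 k m with h | h <;> rw [h] <;> norm_num
    have hkm0 : 0 ≤ A k m := by rcases h01 k m with h | h <;> rw [h] <;> norm_num
    have h1 := (hα i).le; have h2 := (hβ j).le
    have h3 := (hα k).le; have h4 := (hβ m).le
    nlinarith [mul_nonneg (mul_nonneg h1 h2) (mul_nonneg h3 h4),
      mul_le_one₀ hij hkm0 hkm]
  -- upper bound on Q i j times the double sum
  have hup : Q i j * (∑ k ∈ T, ∑ m ∈ S, Q k m) ≤ 1 := by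
    have h1 : Q i j * (∑ k ∈ T, ∑ m ∈ S, Q k m)
        = ∑ k ∈ T, ∑ m ∈ S, Q i j * Q k m := by
      rw [Finset.mul_sum]
      exact Finset.sum_congr rfl fun k _ => by rw [Finset.mul_sum]
    rw [h1]
    have h2 : ∑ k ∈ T, ∑ m ∈ S, Q i j * Q k m
        ≤ ∑ k ∈ T, ∑ m ∈ S, Q i m * Q k j :=
      Finset.sum_le_sum fun k hk => Finset.sum_le_sum fun m hm => key k hk m hm
    have h3 : ∑ k ∈ T, ∑ m ∈ S, Q i m * Q k j
        = (∑ k ∈ T, Q k j) * (∑ m ∈ S, Q i m) := by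
      rw [Finset.sum_mul_sum]
      exact Finset.sum_congr rfl fun k _ => Finset.sum_congr rfl fun m _ => mul_comm _ _
    have h4 : (∑ k ∈ T, Q k j) ≤ 1 := by
      rw [← hcols j]
      exact Finset.sum_le_sum_of_subset_of_nonneg (Finset.subset_univ T)
        (fun k _ _ => hQnn k j)
    have h5 : (∑ m ∈ S, Q i m) ≤ 1 := by
      rw [← hrows i]
      exact Finset.sum_le_sum_of_subset_of_nonneg (Finset.subset_univ S)
        (fun m _ _ => hQnn i m)
    have h6 : 0 ≤ ∑ m ∈ S, Q i m := Finset.sum_nonneg fun m _ => hQnn i m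
    calc ∑ k ∈ T, ∑ m ∈ S, Q i j * Q k m ≤ (∑ k ∈ T, Q k j) * (∑ m ∈ S, Q i m) := by
          rw [← h3]; exact h2
      _ ≤ 1 * 1 := mul_le_mul h4 h5 h6 zero_le_one
      _ = 1 := one_mul 1
  -- lower bound on the double sum
  have hlow : (S.card : ℝ) + T.card - n ≤ ∑ k ∈ T, ∑ m ∈ S, Q k m := by
    have hrow : ∀ k, ∑ m ∈ S, Q k m = 1 - ∑ m ∈ Sᶜ, Q k m := by
      intro k
      have := Finset.sum_add_sum_compl S (fun m => Q k m)
      rw [hrows k] at this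
      linarith
    have h1 : ∑ k ∈ T, ∑ m ∈ S, Q k m
        = (T.card : ℝ) - ∑ k ∈ T, ∑ m ∈ Sᶜ, Q k m := by
      simp only [hrow, Finset.sum_sub_distrib, Finset.sum_const, nsmul_eq_mul, mul_one]
    rw [h1]
    have h2 : ∑ k ∈ T, ∑ m ∈ Sᶜ, Q k m ≤ ∑ k, ∑ m ∈ Sᶜ, Q k m :=
      Finset.sum_le_sum_of_subset_of_nonneg (Finset.subset_univ T)
        (fun k _ _ => Finset.sum_nonneg fun m _ => hQnn k m)
    have h3 : ∑ k, ∑ m ∈ Sᶜ, Q k m = (Sᶜ.card : ℝ) := by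
      rw [show ∑ k, ∑ m ∈ Sᶜ, Q k m = ∑ m ∈ Sᶜ, ∑ k, Q k m from Finset.sum_comm]
      rw [Finset.sum_congr rfl fun m _ => hcols m]
      simp
    have h4 : (Sᶜ.card : ℝ) = n - S.card := by
      have := Finset.card_add_card_compl S
      have : (S.card : ℝ) + Sᶜ.card = n := by
        exact_mod_cast congrArg (Nat.cast : ℕ → ℝ) (by simpa using this)
      linarith
    rw [h3, h4] at h2
    linarith
  -- conclude
  have hsum_gt : 2 * lam * n < ∑ k ∈ T, ∑ m ∈ S, Q k m := by
    have : 2 * lam * n < (S.card : ℝ) + T.card - n := by nlinarith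
    linarith
  have hpos : 0 < 2 * lam * n := by positivity
  rw [le_div_iff₀ hpos]
  calc Q i j * (2 * lam * n) ≤ Q i j * (∑ k ∈ T, ∑ m ∈ S, Q k m) :=
        mul_le_mul_of_nonneg_left hsum_gt.le (hQnn i j)
    _ ≤ 1 := hup
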